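/- For a qubit state ρ with purity P = Tr(ρ²) and Pauli observables A = a·σ, B = b·σ with unit vectors a, b ∈ ℝ³, the average over uniformly random unit vectors a, b of (1/4)|Tr(ρ[A,B])|² equals (2/9)(2P − 1). -/

import Mathlib

open Matrix MeasureTheory ComplexOrder

noncomputable def pauli : Fin 3 → Matrix (Fin 2) (Fin 2) ℂ :=
  ![!![0, 1; 1, 0], !![0, -Complex.I; Complex.I, 0], !![1, 0; 0, -1]]

/-- A Pauli observable `a · σ` for a direction vector `a ∈ ℝ³`. -/
noncomputable def pauliObs (a : EuclideanSpace ℝ (Fin 3)) : Matrix (Fin 2) (Fin 2) ℂ :=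
  ∑ i, (a i : ℂ) • pauli i

namespace AvgRob

local notation "E3" => EuclideanSpace ℝ (Fin 3)
local notation "E2" => EuclideanSpace ℝ (Fin 2)
local notation "S" => Metric.sphere (0 : EuclideanSpace ℝ (Fin 3)) 1

lemma pauliObs_eq (a : E3) :
    pauliObs a = !![(a 2 : ℂ), (a 0 : ℂ) - (a 1 : ℂ) * Complex.I;
                    (a 0 : ℂ) + (a 1 : ℂ) * Complex.I, -(a 2 : ℂ)] := by
  ext i j
  fin_cases i <;> fin_cases j <;>
    simp [pauliObs, pauli, Fin.sum_univ_three] <;> ring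

set_option maxHeartbeats 1000000 in
lemma trace_comm_eq (p q c d : ℝ) (a b : E3) :
    ((!![(p:ℂ), (c:ℂ) + (d:ℂ) * Complex.I; (c:ℂ) - (d:ℂ) * Complex.I, (q:ℂ)]) *
      (pauliObs a * pauliObs b - pauliObs b * pauliObs a)).trace =
    Complex.I * ((2 * ((2*c) * (a 1 * b 2 - a 2 * b 1) + (-2*d) * (a 2 * b 0 - a 0 * b 2)
      + (p - q) * (a 0 * b 1 - a 1 * b 0)) : ℝ) : ℂ) := by
  rw [pauliObs_eq, pauliObs_eq]
  simp only [Matrix.trace_fin_two, Matrix.sub_apply, Matrix.mul_apply, Fin.sum_univ_two,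
    Matrix.of_apply, Matrix.cons_val', Matrix.cons_val_zero, Matrix.cons_val_one,
    Matrix.head_cons, Matrix.empty_val', Matrix.cons_val_fin_one, Matrix.head_fin_const]
  simp only [Complex.ext_iff, Complex.add_re, Complex.add_im, Complex.sub_re, Complex.sub_im,
    Complex.mul_re, Complex.mul_im, Complex.I_re, Complex.I_im, Complex.ofReal_re,
    Complex.ofReal_im, Complex.neg_re, Complex.neg_im]
  constructor <;> ring

/-- sum of squares of coordinates equals norm squared -/
lemma norm_sq_eq3 (x : E3) : ‖x‖ ^ 2 = x 0 ^ 2 + x 1 ^ 2 + x 2 ^ 2 := by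
  rw [EuclideanSpace.norm_eq, Real.sq_sqrt (by positivity)]
  simp [Fin.sum_univ_three, Real.norm_eq_abs, sq_abs]

lemma norm_sq_eq2 (x : E2) : ‖x‖ ^ 2 = x 0 ^ 2 + x 1 ^ 2 := by
  rw [EuclideanSpace.norm_eq, Real.sq_sqrt (by positivity)]
  simp [Fin.sum_univ_two, Real.norm_eq_abs, sq_abs]

lemma abs_coord_le (x : E3) (i : Fin 3) : |x i| ≤ ‖x‖ := by
  have h1 : x i ^ 2 ≤ ‖x‖ ^ 2 := by
    have hsum : x i ^ 2 ≤ ∑ j, x j ^ 2 :=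
      Finset.single_le_sum (fun j _ => sq_nonneg (x j)) (Finset.mem_univ i)
    rw [norm_sq_eq3, ← Fin.sum_univ_three (fun j => x j ^ 2)]
    exact hsum
  calc |x i| = Real.sqrt (x i ^ 2) := (Real.sqrt_sq_eq_abs _).symm
    _ ≤ Real.sqrt (‖x‖ ^ 2) := Real.sqrt_le_sqrt h1
    _ = ‖x‖ := Real.sqrt_sq (norm_nonneg x)

/-- the normalization map is Lipschitz away from the origin -/
lemma lipsN : LipschitzOnWith 2 (fun x : E3 => ‖x‖⁻¹ • x) {x : E3 | 1 ≤ ‖x‖} := by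
  rw [lipschitzOnWith_iff_norm_sub_le]
  intro x hx y hy
  simp only [Set.mem_setOf_eq] at hx hy
  have hxp : (0:ℝ) < ‖x‖ := lt_of_lt_of_le one_pos hx
  have hyp : (0:ℝ) < ‖y‖ := lt_of_lt_of_le one_pos hy
  have h1 : ‖x‖⁻¹ • x - ‖y‖⁻¹ • y = ‖x‖⁻¹ • (x - y) + (‖x‖⁻¹ - ‖y‖⁻¹) • y := by
    rw [smul_sub, sub_smul]; abel
  rw [h1]
  have h2 : ‖‖x‖⁻¹ • (x - y)‖ ≤ ‖x - y‖ := by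
    rw [norm_smul, Real.norm_eq_abs, abs_inv, abs_norm]
    calc ‖x‖⁻¹ * ‖x - y‖ ≤ 1 * ‖x - y‖ := by
          apply mul_le_mul_of_nonneg_right _ (norm_nonneg _)
          rw [inv_le_one_iff₀]; right; exact hx
      _ = ‖x - y‖ := one_mul _
  have h3 : ‖(‖x‖⁻¹ - ‖y‖⁻¹) • y‖ ≤ ‖x - y‖ := by
    rw [norm_smul, Real.norm_eq_abs]
    have he : ‖x‖⁻¹ - ‖y‖⁻¹ = (‖y‖ - ‖x‖) / (‖x‖ * ‖y‖) := by
      field_simp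
    rw [he, abs_div, abs_mul, abs_norm, abs_norm, div_mul_eq_mul_div, mul_comm,
      mul_div_assoc]
    have hbd : |‖y‖ - ‖x‖| ≤ ‖x - y‖ := by
      rw [← norm_sub_rev]
      exact abs_norm_sub_norm_le y x
    calc ‖y‖ * (|‖y‖ - ‖x‖| / (‖x‖ * ‖y‖)) = |‖y‖ - ‖x‖| / ‖x‖ := by
          field_simp
      _ ≤ ‖x - y‖ / ‖x‖ := by gcongr
      _ ≤ ‖x - y‖ / 1 := by gcongr
      _ = ‖x - y‖ := div_one _
  refine le_trans (norm_add_le _ _) ?_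
  push_cast
  linarith

/-- embedding of the plane as an axis-aligned plane -/
noncomputable def ins (i : Fin 3) (s : ℝ) (u : E2) : E3 :=
  if i = 0 then (WithLp.equiv 2 (Fin 3 → ℝ)).symm ![s, u 0, u 1]
  else if i = 1 then (WithLp.equiv 2 (Fin 3 → ℝ)).symm ![u 0, s, u 1]
  else (WithLp.equiv 2 (Fin 3 → ℝ)).symm ![u 0, u 1, s]

lemma isometry_ins (i : Fin 3) (s : ℝ) : Isometry (ins i s) := by
  apply Isometry.of_dist_eq
  intro u v
  fin_cases i <;>
  · simp only [ins, if_true, if_false, Fin.isValue, reduceIte]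
    rw [EuclideanSpace.dist_eq, EuclideanSpace.dist_eq]
    congr 1
    simp [Fin.sum_univ_three, Fin.sum_univ_two, WithLp.equiv_symm_apply, PiLp.toLp_apply, Real.dist_eq]
    try ring

def Q (i : Fin 3) (s : ℝ) : Set (EuclideanSpace ℝ (Fin 3)) :=
  {y : E3 | y i = s ∧ ∀ j, |y j| ≤ 2}

lemma haar2 : (μH[2] : Measure E2).IsAddHaarMeasure := by
  have h : ((2:ℕ):ℝ) = (2:ℝ) := by norm_num
  rw [show (μH[2] : Measure E2) = μH[((Module.finrank ℝ E2 : ℕ) : ℝ)] by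
    rw [finrank_euclideanSpace_fin]; norm_num]
  infer_instance

lemma measure_Q_lt_top (i : Fin 3) (s : ℝ) : μH[2] (Q i s) < ⊤ := by
  have hsub : Q i s ⊆ ins i s '' Metric.closedBall (0 : E2) 3 := by
    intro y hy
    obtain ⟨hyi, hyb⟩ := hy
    have key : ∀ u : E2, ‖u‖ ≤ 3 → u ∈ Metric.closedBall (0 : E2) 3 := by
      intro u hu; simpa [Metric.mem_closedBall, dist_zero_right] using hu
    have hn : ∀ w z : ℝ, |w| ≤ 2 → |z| ≤ 2 →
        ‖(WithLp.equiv 2 (Fin 2 → ℝ)).symm ![w, z]‖ ≤ 3 := by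
      intro w z hw hz
      have h2 : ‖(WithLp.equiv 2 (Fin 2 → ℝ)).symm ![w, z]‖ ^ 2 ≤ 9 := by
        rw [norm_sq_eq2]
        simp only [WithLp.equiv_symm_apply, PiLp.toLp_apply, Matrix.cons_val_zero, Matrix.cons_val_one,
          Matrix.head_cons]
        nlinarith [abs_nonneg w, abs_nonneg z, sq_abs w, sq_abs z]
      nlinarith [norm_nonneg ((WithLp.equiv 2 (Fin 2 → ℝ)).symm ![w, z])]
    fin_cases i
    · refine ⟨(WithLp.equiv 2 (Fin 2 → ℝ)).symm ![y 1, y 2], key _ (hn _ _ (hyb 1) (hyb 2)), ?_⟩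
      simp only [ins, if_true, Fin.isValue, reduceIte]
      ext j
      fin_cases j <;> simp_all [WithLp.equiv_symm_apply, PiLp.toLp_apply]
    · refine ⟨(WithLp.equiv 2 (Fin 2 → ℝ)).symm ![y 0, y 2], key _ (hn _ _ (hyb 0) (hyb 2)), ?_⟩
      simp only [ins, Fin.isValue, reduceIte]
      ext j
      fin_cases j <;> simp_all [WithLp.equiv_symm_apply, PiLp.toLp_apply]
    · refine ⟨(WithLp.equiv 2 (Fin 2 → ℝ)).symm ![y 0, y 1], key _ (hn _ _ (hyb 0) (hyb 1)), ?_⟩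
      simp only [ins, Fin.isValue, reduceIte]
      ext j
      fin_cases j <;> simp_all [WithLp.equiv_symm_apply, PiLp.toLp_apply]
  calc μH[2] (Q i s) ≤ μH[2] (ins i s '' Metric.closedBall (0 : E2) 3) := measure_mono hsub
    _ = μH[2] (Metric.closedBall (0 : E2) 3) :=
        (isometry_ins i s).hausdorffMeasure_image (Or.inl (by norm_num)) _
    _ < ⊤ := by
        haveI := haar2
        exact (isCompact_closedBall _ _).measure_lt_top

lemma sphere_subset : (S : Set E3) ⊆
    ⋃ p : Fin 3 × Bool, (fun x : E3 => ‖x‖⁻¹ • x) ''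
      (Q p.1 (cond p.2 1 (-1)) ∩ {x : E3 | 1 ≤ ‖x‖}) := by
  intro x hx
  have hxn : ‖x‖ = 1 := by simpa [mem_sphere_zero_iff_norm] using hx
  -- find a big coordinate
  have hex : ∃ i : Fin 3, 1/2 ≤ |x i| := by
    by_contra h
    push_neg at h
    have h2 : ‖x‖ ^ 2 < 3/4 := by
      rw [norm_sq_eq3]
      have h0 := h 0; have h1 := h 1; have h2 := h 2
      nlinarith [abs_nonneg (x 0), abs_nonneg (x 1), abs_nonneg (x 2),
        sq_abs (x 0), sq_abs (x 1), sq_abs (x 2)]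
    rw [hxn] at h2; norm_num at h2
  obtain ⟨i, hi⟩ := hex
  have hipos : (0:ℝ) < |x i| := lt_of_lt_of_le (by norm_num) hi
  set t : Bool := decide (0 ≤ x i) with ht
  set y : E3 := |x i|⁻¹ • x with hy
  have hyi : y i = cond t 1 (-1) := by
    have hyi' : y i = |x i|⁻¹ * x i := rfl
    by_cases h0 : 0 ≤ x i
    · have habs : |x i| = x i := abs_of_nonneg h0
      have hne : x i ≠ 0 := by rw [← habs]; exact hipos.ne'
      simp only [ht, h0, decide_true, cond_true, hyi', habs]
      field_simp
    · have hlt : x i < 0 := lt_of_not_ge h0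
      have habs : |x i| = -x i := abs_of_neg hlt
      simp only [ht, h0, decide_false, cond_false, hyi', habs]
      field_simp
      rw [div_self hlt.ne]
  refine Set.mem_iUnion.2 ⟨(i, t), ⟨y, ⟨⟨hyi, ?_⟩, ?_⟩, ?_⟩⟩
  · -- coords of y bounded by 2
    intro j
    show |(|x i|⁻¹ • x) j| ≤ 2
    have hxj : |x j| ≤ 1 := hxn ▸ abs_coord_le x j
    simp only [PiLp.smul_apply, smul_eq_mul, abs_mul, abs_inv, abs_abs]
    calc |x i|⁻¹ * |x j| ≤ (1/2)⁻¹ * 1 := by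
          apply mul_le_mul _ hxj (abs_nonneg _) (by positivity)
          exact inv_anti₀ (by norm_num) hi
      _ = 2 := by norm_num
  · -- 1 ≤ ‖y‖
    show (1:ℝ) ≤ ‖|x i|⁻¹ • x‖
    rw [norm_smul, Real.norm_eq_abs, abs_inv, abs_abs, hxn, mul_one]
    have hle1 : |x i| ≤ 1 := hxn ▸ abs_coord_le x i
    exact (one_le_inv₀ hipos).mpr hle1
  · -- normalization of y is x
    show ‖y‖⁻¹ • y = x
    have hyn : ‖y‖ = |x i|⁻¹ := by
      rw [hy, norm_smul, Real.norm_eq_abs, abs_inv, abs_abs, hxn, mul_one]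
    rw [hyn, hy, inv_inv, smul_smul, mul_inv_cancel₀ hipos.ne', one_smul]


lemma sphere_fin : μH[2] (S : Set E3) < ⊤ := by
  have hle := measure_mono sphere_subset (μ := (μH[2] : Measure E3))
  have hle2 := measure_iUnion_le (μ := (μH[2] : Measure E3))
    (s := fun p : Fin 3 × Bool => (fun x : E3 => ‖x‖⁻¹ • x) ''
      (Q p.1 (cond p.2 1 (-1)) ∩ {x : E3 | 1 ≤ ‖x‖}))
  refine lt_of_le_of_lt (hle.trans hle2) ?_
  rw [tsum_fintype]
  refine ENNReal.sum_lt_top.mpr fun p _ => ?_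
  have hlip : LipschitzOnWith 2 (fun x : E3 => ‖x‖⁻¹ • x)
      (Q p.1 (cond p.2 1 (-1)) ∩ {x : E3 | 1 ≤ ‖x‖}) :=
    lipsN.mono Set.inter_subset_right
  refine lt_of_le_of_lt (hlip.hausdorffMeasure_image_le (by norm_num)) ?_
  refine ENNReal.mul_lt_top ?_ ?_
  · exact ENNReal.rpow_lt_top_of_nonneg (by norm_num) ENNReal.coe_ne_top
  · exact lt_of_le_of_lt (measure_mono Set.inter_subset_left) (measure_Q_lt_top _ _)

/-- the projection to the first two coordinates -/
noncomputable def prj (x : E3) : E2 := (WithLp.equiv 2 (Fin 2 → ℝ)).symm ![x 0, x 1]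

lemma lips_prj : LipschitzWith 1 prj := by
  apply LipschitzWith.of_dist_le_mul
  intro x y
  rw [NNReal.coe_one, one_mul, EuclideanSpace.dist_eq, EuclideanSpace.dist_eq]
  apply Real.sqrt_le_sqrt
  rw [Fin.sum_univ_three, Fin.sum_univ_two]
  have h0 : dist (prj x 0) (prj y 0) = dist (x 0) (y 0) := by
    simp [prj, WithLp.equiv_symm_apply, PiLp.toLp_apply]
  have h1 : dist (prj x 1) (prj y 1) = dist (x 1) (y 1) := by
    simp [prj, WithLp.equiv_symm_apply, PiLp.toLp_apply]
  rw [h0, h1]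
  have := sq_nonneg (dist (x 2) (y 2))
  linarith

lemma sphere_pos : 0 < μH[2] (S : Set E3) := by
  have hsub : Metric.ball (0 : E2) (1/2) ⊆ prj '' (S : Set E3) := by
    intro u hu
    have hun : ‖u‖ < 1/2 := by simpa [Metric.mem_ball, dist_zero_right] using hu
    have hsq : u 0 ^ 2 + u 1 ^ 2 < 1 := by
      have := norm_sq_eq2 u
      nlinarith [norm_nonneg u]
    set w : ℝ := Real.sqrt (1 - (u 0 ^ 2 + u 1 ^ 2)) with hw
    have hw2 : w ^ 2 = 1 - (u 0 ^ 2 + u 1 ^ 2) := Real.sq_sqrt (by linarith)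
    set z : E3 := (WithLp.equiv 2 (Fin 3 → ℝ)).symm ![u 0, u 1, w] with hz
    have hz0 : z 0 = u 0 := rfl
    have hz1 : z 1 = u 1 := rfl
    have hz2 : z 2 = w := rfl
    have hzn : ‖z‖ = 1 := by
      have : ‖z‖ ^ 2 = 1 := by rw [norm_sq_eq3, hz0, hz1, hz2, hw2]; ring
      nlinarith [norm_nonneg z]
    refine ⟨z, ?_, ?_⟩
    · simpa [mem_sphere_zero_iff_norm] using hzn
    · ext j
      fin_cases j <;> simp [prj, WithLp.equiv_symm_apply, PiLp.toLp_apply, hz0, hz1]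
  have hball : 0 < μH[2] (Metric.ball (0 : E2) (1/2)) := by
    haveI := haar2
    exact Metric.measure_ball_pos _ _ (by norm_num)
  have himg : 0 < μH[2] (prj '' (S : Set E3)) :=
    lt_of_lt_of_le hball (measure_mono hsub)
  by_contra h
  push_neg at h
  have h0 : μH[2] (S : Set E3) = 0 := le_antisymm h zero_le
  have hb := lips_prj.hausdorffMeasure_image_le (show (0:ℝ) ≤ 2 by norm_num) (S : Set E3)
  rw [h0, mul_zero] at hb
  exact absurd (le_antisymm hb zero_le) himg.ne'

lemma rot_integral (f : E3 ≃ₗᵢ[ℝ] E3) (g : E3 → ℝ) :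
    ∫ x in (S : Set E3), g (f x) ∂μH[2] = ∫ x in (S : Set E3), g x ∂μH[2] := by
  have hmp : MeasurePreserving (⇑f) (μH[2] : Measure E3) μH[2] :=
    f.toIsometryEquiv.measurePreserving_hausdorffMeasure 2
  have hemb : MeasurableEmbedding (⇑f) :=
    f.toHomeomorph.measurableEmbedding
  have hpre : (⇑f) ⁻¹' (S : Set E3) = (S : Set E3) := by
    ext x
    simp [mem_sphere_zero_iff_norm, f.norm_map]
  rw [← hmp.setIntegral_preimage_emb hemb g (S : Set E3), hpre]

lemma integrableOn_sphere (g : E3 → ℝ) (hg : Continuous g) :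
    IntegrableOn g (S : Set E3) μH[2] := by
  obtain ⟨C, hC⟩ := (isCompact_sphere (0:E3) 1).exists_bound_of_continuousOn hg.continuousOn
  exact Measure.integrableOn_of_bounded sphere_fin.ne hg.aestronglyMeasurable
    ((ae_restrict_iff' Metric.isClosed_sphere.measurableSet).2 (ae_of_all _ hC))

lemma cont_inner_sq (v : E3) : Continuous (fun b : E3 => (inner ℝ v b : ℝ) ^ 2) :=
  (continuous_const.inner continuous_id).pow 2

lemma integral_inner_sq_eq (u w : E3) (hu : ‖u‖ = 1) (hw : ‖w‖ = 1) :
    ∫ b in (S : Set E3), (inner ℝ u b : ℝ) ^ 2 ∂μH[2]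
      = ∫ b in (S : Set E3), (inner ℝ w b : ℝ) ^ 2 ∂μH[2] := by
  set f := Submodule.reflection (ℝ ∙ (u - w))ᗮ with hf
  have hfu : f u = w := Submodule.reflection_sub (by rw [hu, hw])
  have h1 : ∀ b : E3, (inner ℝ u b : ℝ) ^ 2 = (fun x => (inner ℝ w x : ℝ) ^ 2) (f b) := by
    intro b
    simp only
    rw [← hfu, LinearIsometryEquiv.inner_map_map]
  calc ∫ b in (S : Set E3), (inner ℝ u b : ℝ) ^ 2 ∂μH[2]
      = ∫ b in (S : Set E3), (fun x => (inner ℝ w x : ℝ) ^ 2) (f b) ∂μH[2] := by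
        simp_rw [h1]
    _ = ∫ b in (S : Set E3), (inner ℝ w b : ℝ) ^ 2 ∂μH[2] := by
          exact rot_integral f (fun x => (inner ℝ w x : ℝ) ^ 2)

lemma integral_inner_sq (v : E3) :
    ∫ b in (S : Set E3), (inner ℝ v b : ℝ) ^ 2 ∂μH[2]
      = (μH[2] (S : Set E3)).toReal / 3 * ‖v‖ ^ 2 := by
  -- first the unit vector case
  have hunit : ∀ u : E3, ‖u‖ = 1 →
      ∫ b in (S : Set E3), (inner ℝ u b : ℝ) ^ 2 ∂μH[2]
        = (μH[2] (S : Set E3)).toReal / 3 := by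
    intro u hu
    set e : Fin 3 → E3 := fun i => EuclideanSpace.single i (1:ℝ) with he
    have hen : ∀ i, ‖e i‖ = 1 := by
      intro i; simp [he, EuclideanSpace.norm_single]
    have hsum : ∫ b in (S : Set E3),
        ((inner ℝ (e 0) b : ℝ) ^ 2 + (inner ℝ (e 1) b : ℝ) ^ 2 + (inner ℝ (e 2) b : ℝ) ^ 2) ∂μH[2]
        = (μH[2] (S : Set E3)).toReal := by
      rw [setIntegral_congr_fun Metric.isClosed_sphere.measurableSet (g := fun _ => (1:ℝ)) ?_]
      · rw [setIntegral_const, smul_eq_mul, mul_one, measureReal_def]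
      · intro b hb
        have hbn : ‖b‖ = 1 := by simpa [mem_sphere_zero_iff_norm] using hb
        have hinner : ∀ i : Fin 3, (inner ℝ (e i) b : ℝ) = b i := by
          intro i
          simp [he, EuclideanSpace.inner_single_left]
        simp only [hinner]
        have := norm_sq_eq3 b
        rw [hbn] at this
        nlinarith [this]
    have hsplit : ∫ b in (S : Set E3),
        ((inner ℝ (e 0) b : ℝ) ^ 2 + (inner ℝ (e 1) b : ℝ) ^ 2 + (inner ℝ (e 2) b : ℝ) ^ 2) ∂μH[2]
        = (∫ b in (S : Set E3), (inner ℝ (e 0) b : ℝ) ^ 2 ∂μH[2])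
          + (∫ b in (S : Set E3), (inner ℝ (e 1) b : ℝ) ^ 2 ∂μH[2])
          + (∫ b in (S : Set E3), (inner ℝ (e 2) b : ℝ) ^ 2 ∂μH[2]) := by
      rw [integral_add, integral_add] <;>
        first
        | exact integrableOn_sphere _ (cont_inner_sq _)
        | exact (integrableOn_sphere _ (cont_inner_sq _)).add (integrableOn_sphere _ (cont_inner_sq _))
    have heq0 := integral_inner_sq_eq u (e 0) hu (hen 0)
    have hueq : ∀ i, ∫ b in (S : Set E3), (inner ℝ (e i) b : ℝ) ^ 2 ∂μH[2]
        = ∫ b in (S : Set E3), (inner ℝ (e 0) b : ℝ) ^ 2 ∂μH[2] := by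
      intro i
      exact integral_inner_sq_eq (e i) (e 0) (hen i) (hen 0)
    rw [hsplit, hueq 1, hueq 2] at hsum
    rw [heq0]
    linarith
  by_cases hv : v = 0
  · simp [hv]
  · have hvn : ‖v‖ ≠ 0 := norm_ne_zero_iff.mpr hv
    set u : E3 := ‖v‖⁻¹ • v with hu
    have hun : ‖u‖ = 1 := norm_smul_inv_norm hv
    have hvu : v = ‖v‖ • u := by
      rw [hu, smul_smul, mul_inv_cancel₀ hvn, one_smul]
    calc ∫ b in (S : Set E3), (inner ℝ v b : ℝ) ^ 2 ∂μH[2]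
        = ∫ b in (S : Set E3), ‖v‖ ^ 2 * (inner ℝ u b : ℝ) ^ 2 ∂μH[2] := by
          congr 1
          funext b
          have hib : (inner ℝ v b : ℝ) = ‖v‖ * (inner ℝ u b : ℝ) := by
            conv_lhs => rw [hvu]
            exact real_inner_smul_left u b ‖v‖
          rw [hib]
          ring
      _ = ‖v‖ ^ 2 * ∫ b in (S : Set E3), (inner ℝ u b : ℝ) ^ 2 ∂μH[2] := by
          rw [integral_const_mul]
      _ = (μH[2] (S : Set E3)).toReal / 3 * ‖v‖ ^ 2 := by
          rw [hunit u hun]; ring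

end AvgRob


/-- The averaged Robertson bound for a qubit equals `(2/9)(2P − 1)`, where
`P = Tr(ρ²)` is the purity; the average is over `a, b` uniform on the unit
sphere `S² ⊆ ℝ³` (with the 2-dimensional Hausdorff measure). -/
theorem averaged_robertson_bound (ρ : Matrix (Fin 2) (Fin 2) ℂ)
    (hρ : ρ.PosSemidef) (hρtr : ρ.trace = 1) :
    (⨍ a in Metric.sphere (0 : EuclideanSpace ℝ (Fin 3)) 1,
      ⨍ b in Metric.sphere (0 : EuclideanSpace ℝ (Fin 3)) 1,
        (1 / 4) * ‖
          (ρ * (pauliObs a * pauliObs b - pauliObs b * pauliObs a)).trace‖ ^ 2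
        ∂(μH[2]) ∂(μH[2])) =
    (2 / 9) * (2 * (ρ * ρ).trace.re - 1) := by
  classical
  have hH : ρᴴ = ρ := hρ.1
  set p : ℝ := (ρ 0 0).re with hp
  set q : ℝ := (ρ 1 1).re with hq
  set c : ℝ := (ρ 0 1).re with hc
  set d : ℝ := (ρ 0 1).im with hd
  have haux : ∀ i j, ρᴴ j i = star (ρ i j) := fun i j => Matrix.conjTranspose_apply ρ i j
  have hstar : ∀ i j, star (ρ i j) = ρ j i :=
    fun i j => (haux i j).symm.trans (congrFun (congrFun hH j) i)
  have h10 : ρ 1 0 = star (ρ 0 1) := (hstar 0 1).symm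
  have h00im : (ρ 0 0).im = 0 := by
    have him := congrArg Complex.im (hstar 0 0)
    simp only [Complex.star_def, Complex.conj_im] at him
    linarith
  have h11im : (ρ 1 1).im = 0 := by
    have him := congrArg Complex.im (hstar 1 1)
    simp only [Complex.star_def, Complex.conj_im] at him
    linarith
  have hrho : ρ = !![(p:ℂ), (c:ℂ) + (d:ℂ) * Complex.I; (c:ℂ) - (d:ℂ) * Complex.I, (q:ℂ)] := by
    ext i j
    fin_cases i <;> fin_cases j <;>
      simp only [Matrix.of_apply, Matrix.cons_val', Matrix.cons_val_zero, Matrix.cons_val_one,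
        Matrix.head_cons, Matrix.empty_val', Matrix.cons_val_fin_one, Matrix.head_fin_const,
        Fin.isValue, Fin.mk_one, Fin.mk_zero]
    · apply Complex.ext <;> simp [hp, h00im]
    · apply Complex.ext <;> simp [hc, hd]
    · rw [h10]
      apply Complex.ext <;>
        simp [hc, hd, Complex.star_def, Complex.conj_re, Complex.conj_im]
    · apply Complex.ext <;> simp [hq, h11im]
  have hpq : p + q = 1 := by
    have htr := congrArg Complex.re hρtr
    rw [Matrix.trace_fin_two, Complex.add_re] at htr
    simpa [hp, hq] using htr
  set r : EuclideanSpace ℝ (Fin 3) :=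
    (WithLp.equiv 2 (Fin 3 → ℝ)).symm ![2*c, -2*d, p - q] with hr
  set v : EuclideanSpace ℝ (Fin 3) → EuclideanSpace ℝ (Fin 3) := fun a =>
    (WithLp.equiv 2 (Fin 3 → ℝ)).symm
      ![r 1 * a 2 - r 2 * a 1, r 2 * a 0 - r 0 * a 2, r 0 * a 1 - r 1 * a 0] with hv
  have hr0 : r 0 = 2*c := rfl
  have hr1 : r 1 = -2*d := rfl
  have hr2 : r 2 = p - q := rfl
  have hva : ∀ a, (v a 0 = r 1 * a 2 - r 2 * a 1) ∧ (v a 1 = r 2 * a 0 - r 0 * a 2)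
      ∧ (v a 2 = r 0 * a 1 - r 1 * a 0) := fun a => ⟨rfl, rfl, rfl⟩
  -- the pointwise algebraic identity
  have key1 : ∀ a b : EuclideanSpace ℝ (Fin 3),
      (1 / 4) * ‖
          (ρ * (pauliObs a * pauliObs b - pauliObs b * pauliObs a)).trace‖ ^ 2
        = (inner ℝ (v a) b : ℝ) ^ 2 := by
    intro a b
    rw [hrho, AvgRob.trace_comm_eq, norm_mul, Complex.norm_I, Complex.norm_real, Real.norm_eq_abs, one_mul, sq_abs]
    rw [PiLp.inner_apply]
    simp only [RCLike.inner_apply, conj_trivial, Fin.sum_univ_three,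
      (hva a).1, (hva a).2.1, (hva a).2.2, hr0, hr1, hr2]
    ring
  have htne : (μH[2] (Metric.sphere (0 : EuclideanSpace ℝ (Fin 3)) 1)).toReal ≠ 0 := by
    rw [ENNReal.toReal_ne_zero]
    exact ⟨AvgRob.sphere_pos.ne', AvgRob.sphere_fin.ne⟩
  have hinner : ∀ a : EuclideanSpace ℝ (Fin 3),
      (⨍ b in Metric.sphere (0 : EuclideanSpace ℝ (Fin 3)) 1,
        (1 / 4) * ‖
          (ρ * (pauliObs a * pauliObs b - pauliObs b * pauliObs a)).trace‖ ^ 2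
        ∂(μH[2])) = ‖v a‖ ^ 2 / 3 := by
    intro a
    rw [setAverage_eq, measureReal_def]
    simp_rw [key1 a]
    rw [AvgRob.integral_inner_sq (v a), smul_eq_mul]
    field_simp
  simp only [hinner]
  -- Lagrange identity
  have lagrange : ∀ a : EuclideanSpace ℝ (Fin 3),
      ‖v a‖ ^ 2 = ‖r‖ ^ 2 * ‖a‖ ^ 2 - (inner ℝ r a : ℝ) ^ 2 := by
    intro a
    rw [AvgRob.norm_sq_eq3, AvgRob.norm_sq_eq3, AvgRob.norm_sq_eq3, PiLp.inner_apply]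
    simp only [RCLike.inner_apply, conj_trivial, Fin.sum_univ_three,
      (hva a).1, (hva a).2.1, (hva a).2.2]
    ring
  rw [setAverage_eq, measureReal_def]
  rw [setIntegral_congr_fun Metric.isClosed_sphere.measurableSet
    (g := fun a => ‖r‖ ^ 2 / 3 - (inner ℝ r a : ℝ) ^ 2 / 3) ?_]
  swap
  · intro a ha
    have han : ‖a‖ = 1 := by simpa [mem_sphere_zero_iff_norm] using ha
    simp only [lagrange a, han]
    ring
  rw [integral_sub (show Integrable (fun _ : EuclideanSpace ℝ (Fin 3) => ‖r‖ ^ 2 / 3)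
      ((μH[2] : Measure (EuclideanSpace ℝ (Fin 3))).restrict (Metric.sphere 0 1)) from
      integrableOn_const (C := ‖r‖ ^ 2 / 3) AvgRob.sphere_fin.ne enorm_ne_top)
    ((AvgRob.integrableOn_sphere _ (AvgRob.cont_inner_sq r)).div_const 3)]
  rw [setIntegral_const, integral_div, AvgRob.integral_inner_sq r, smul_eq_mul, smul_eq_mul,
    measureReal_def]
  -- purity computation
  have hPre : (ρ * ρ).trace.re = p^2 + q^2 + 2*c^2 + 2*d^2 := by
    rw [hrho]
    simp only [Matrix.trace_fin_two, Matrix.mul_apply, Fin.sum_univ_two,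
      Matrix.of_apply, Matrix.cons_val', Matrix.cons_val_zero, Matrix.cons_val_one,
      Matrix.head_cons, Matrix.empty_val', Matrix.cons_val_fin_one, Matrix.head_fin_const,
      Complex.add_re, Complex.mul_re, Complex.mul_im, Complex.sub_re, Complex.sub_im,
      Complex.add_im, Complex.I_re, Complex.I_im, Complex.ofReal_re, Complex.ofReal_im]
    ring
  have hrr : ‖r‖ ^ 2 = (2*c)^2 + (-2*d)^2 + (p-q)^2 := by
    rw [AvgRob.norm_sq_eq3, hr0, hr1, hr2]
  rw [hPre]
  have hX : (2:ℝ) * (p^2+q^2+2*c^2+2*d^2) - 1 = ‖r‖^2 := by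
    rw [hrr]; linear_combination (p+q+1)*hpq
  rw [hX]
  set T := (μH[2] (Metric.sphere (0 : EuclideanSpace ℝ (Fin 3)) 1)).toReal with hT
  field_simp
  ring
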